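/- For every k ≥ 0, E[Φₖ] = e^{λkt}(φ + 1) − 1. -/

import Mathlib

open MeasureTheory Real ProbabilityTheory
open scoped NNReal ENNReal

/-- Standard Gaussian density on ℝ. -/
noncomputable def gaussDensity (z : ℝ) : ℝ := Real.exp (-z ^ 2 / 2) / Real.sqrt (2 * Real.pi)

/-- One-step update of the conditional odds process upon observing a normalized
increment `z` after a waiting time `t`, starting from odds `φ`. -/
noncomputable def jfun (lam alp t φ z : ℝ) : ℝ :=
  Real.exp (alp * z * Real.sqrt t + (lam - alp ^ 2 / 2) * t) * φ +
    ∫ u in (0:ℝ)..t, lam * Real.exp ((lam + alp * z / Real.sqrt t) * u - alp ^ 2 * u ^ 2 / (2 * t))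


/-- The discretely observed odds chain: `Φ₀ = φ` and `Φₖ = j(t, Φₖ₋₁, Zₖ)`. -/
noncomputable def oddsChain {Ω : Type*} (lam alp t φ : ℝ) (Z : ℕ → Ω → ℝ) : ℕ → Ω → ℝ
  | 0 => fun _ => φ
  | k + 1 => fun ω => jfun lam alp t (oddsChain lam alp t φ Z k ω) (Z (k + 1) ω)

/-- The filtration `Fₖ = σ(Z₁, …, Zₖ)` generated by the first `k` observations
(`F₀` is trivial). -/
def obsFiltration {Ω : Type*} (Z : ℕ → Ω → ℝ) (k : ℕ) : MeasurableSpace Ω :=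
  ⨆ i ∈ Set.Icc 1 k, MeasurableSpace.comap (Z i) inferInstance

lemma gaussReal_eq : gaussianReal 0 1 =
    volume.withDensity (fun x => ((Real.toNNReal (gaussianPDFReal 0 1 x) : ℝ≥0) : ℝ≥0∞)) := by
  rw [gaussianReal_of_var_ne_zero 0 one_ne_zero]
  rfl

lemma exp_eq_aux (c x : ℝ) : Real.exp (c*x - x^2/2) = Real.exp (c^2/2) * Real.exp (-(1/2) * (x - c)^2) := by
  rw [← Real.exp_add]; ring_nf

lemma integrable_exp_vol (c : ℝ) : Integrable (fun x => Real.exp (c*x - x^2/2)) volume := by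
  simp only [exp_eq_aux]
  exact ((integrable_exp_neg_mul_sq (by norm_num : (0:ℝ) < 1/2)).comp_sub_right c).const_mul _

lemma integral_exp_vol (c : ℝ) : ∫ x, Real.exp (c*x - x^2/2) = Real.exp (c^2/2) * Real.sqrt (2*π) := by
  simp only [exp_eq_aux]
  rw [integral_const_mul]
  congr 1
  have := integral_sub_right_eq_self (fun x => Real.exp (-(1/2) * x^2)) c (μ := volume)
  rw [this, integral_gaussian]
  norm_num; ring

lemma pdf_mul (c x : ℝ) : gaussianPDFReal 0 1 x * Real.exp (c*x)
    = (Real.sqrt (2*π))⁻¹ * Real.exp (c*x - x^2/2) := by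
  simp only [gaussianPDFReal, NNReal.coe_one, mul_one, sub_zero]
  rw [mul_assoc, ← Real.exp_add]
  ring_nf

lemma pdf_smul (c : ℝ) : (fun x => Real.toNNReal (gaussianPDFReal 0 1 x) • Real.exp (c*x))
    = fun x => (Real.sqrt (2*π))⁻¹ * Real.exp (c*x - x^2/2) := by
  funext x
  rw [NNReal.smul_def, Real.coe_toNNReal _ (gaussianPDFReal_nonneg 0 1 x), smul_eq_mul, pdf_mul]

lemma integrable_exp_gauss (c : ℝ) : Integrable (fun x => Real.exp (c*x)) (gaussianReal 0 1) := by
  rw [gaussReal_eq, integrable_withDensity_iff_integrable_smul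
    ((measurable_gaussianPDFReal 0 1).real_toNNReal)]
  rw [pdf_smul]
  exact (integrable_exp_vol c).const_mul _

lemma integral_exp_gauss (c : ℝ) : ∫ x, Real.exp (c*x) ∂(gaussianReal 0 1) = Real.exp (c^2/2) := by
  rw [gaussReal_eq, integral_withDensity_eq_integral_smul
    ((measurable_gaussianPDFReal 0 1).real_toNNReal)]
  rw [pdf_smul, integral_const_mul, integral_exp_vol]
  have h : Real.sqrt (2*π) ≠ 0 := by positivity
  field_simp

lemma integrable_exp_abs_gauss (c : ℝ) : Integrable (fun x => Real.exp (c*|x|)) (gaussianReal 0 1) := by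
  refine ((integrable_exp_gauss c).add (integrable_exp_gauss (-c))).mono'
    (Continuous.aestronglyMeasurable (by fun_prop)) (Filter.Eventually.of_forall fun x => ?_)
  rw [Real.norm_eq_abs, abs_of_pos (Real.exp_pos _), Pi.add_apply]
  rcases abs_cases x with ⟨h, _⟩ | ⟨h, _⟩
  · rw [h]; exact le_add_of_nonneg_right (Real.exp_pos _).le
  · rw [h, mul_neg, ← neg_mul]; exact le_add_of_nonneg_left (Real.exp_pos _).le

noncomputable def Ifun (lam alp t z : ℝ) : ℝ :=
  ∫ u in (0:ℝ)..t, lam * Real.exp ((lam + alp * z / Real.sqrt t) * u - alp ^ 2 * u ^ 2 / (2 * t))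

lemma continuous_Ifun (lam alp t : ℝ) : Continuous (Ifun lam alp t) := by
  apply intervalIntegral.continuous_parametric_intervalIntegral_of_continuous' (μ := volume)
    (f := fun z u => lam * Real.exp ((lam + alp * z / Real.sqrt t) * u - alp ^ 2 * u ^ 2 / (2 * t)))
  fun_prop

lemma Ifun_nonneg {lam t : ℝ} (hlam : 0 < lam) (ht : 0 < t) (alp z : ℝ) :
    0 ≤ Ifun lam alp t z :=
  intervalIntegral.integral_nonneg ht.le (fun u _ => by positivity)

lemma exponent_le {lam alp t : ℝ} (hlam : 0 < lam) (halp : 0 < alp) (ht : 0 < t)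
    {u : ℝ} (hu : u ∈ Set.Icc (0:ℝ) t) (z : ℝ) :
    (lam + alp * z / Real.sqrt t) * u - alp ^ 2 * u ^ 2 / (2 * t)
      ≤ lam * t + alp * Real.sqrt t * |z| := by
  obtain ⟨hu0, hut⟩ := hu
  have hs : 0 < Real.sqrt t := Real.sqrt_pos.mpr ht
  have hss : Real.sqrt t * Real.sqrt t = t := Real.mul_self_sqrt ht.le
  have h1 : alp ^ 2 * u ^ 2 / (2 * t) ≥ 0 := by positivity
  have h2 : alp * z / Real.sqrt t * u ≤ alp * Real.sqrt t * |z| := by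
    rw [div_mul_eq_mul_div, div_le_iff₀ hs]
    have h4 : z * u ≤ |z| * u := mul_le_mul_of_nonneg_right (le_abs_self z) hu0
    have h5 : |z| * u ≤ |z| * t := mul_le_mul_of_nonneg_left hut (abs_nonneg z)
    have h6 : alp * Real.sqrt t * |z| * Real.sqrt t = alp * |z| * (Real.sqrt t * Real.sqrt t) := by
      ring
    rw [h6, hss]
    nlinarith
  have h3 : lam * u ≤ lam * t := by nlinarith
  nlinarith

lemma Ifun_le {lam alp t : ℝ} (hlam : 0 < lam) (halp : 0 < alp) (ht : 0 < t) (z : ℝ) :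
    Ifun lam alp t z ≤ lam * t * Real.exp (lam * t) * Real.exp (alp * Real.sqrt t * |z|) := by
  have hb : Ifun lam alp t z ≤ ∫ _ in (0:ℝ)..t, lam * Real.exp (lam * t + alp * Real.sqrt t * |z|) := by
    apply intervalIntegral.integral_mono_on ht.le _ (intervalIntegrable_const)
    · intro u hu
      exact mul_le_mul_of_nonneg_left (Real.exp_le_exp.mpr (exponent_le hlam halp ht hu z)) hlam.le
    · apply Continuous.intervalIntegrable; fun_prop
  rw [intervalIntegral.integral_const, smul_eq_mul] at hb
  calc Ifun lam alp t z ≤ (t - 0) * (lam * Real.exp (lam * t + alp * Real.sqrt t * |z|)) := hb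
    _ = lam * t * Real.exp (lam * t) * Real.exp (alp * Real.sqrt t * |z|) := by
        rw [Real.exp_add]; ring

lemma integrable_Ifun_gauss {lam alp t : ℝ} (hlam : 0 < lam) (halp : 0 < alp) (ht : 0 < t) :
    Integrable (Ifun lam alp t) (gaussianReal 0 1) := by
  refine ((integrable_exp_abs_gauss (alp * Real.sqrt t)).const_mul
    (lam * t * Real.exp (lam * t))).mono'
    (continuous_Ifun lam alp t).aestronglyMeasurable (Filter.Eventually.of_forall fun z => ?_)
  rw [Real.norm_eq_abs, abs_of_nonneg (Ifun_nonneg hlam ht alp z)]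
  simpa [mul_assoc] using Ifun_le hlam halp ht z

lemma integral_Ifun_gauss {lam alp t : ℝ} (hlam : 0 < lam) (halp : 0 < alp) (ht : 0 < t) :
    ∫ z, Ifun lam alp t z ∂(gaussianReal 0 1) = Real.exp (lam * t) - 1 := by
  set γ := gaussianReal 0 1
  set ν := volume.restrict (Set.Ioc (0:ℝ) t) with hν
  have hfin : IsFiniteMeasure ν := by
    constructor
    rw [hν, Measure.restrict_apply_univ]
    exact measure_Ioc_lt_top
  set F : ℝ → ℝ → ℝ := fun z u =>
    lam * Real.exp ((lam + alp * z / Real.sqrt t) * u - alp ^ 2 * u ^ 2 / (2 * t)) with hF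
  have hFcont : Continuous (Function.uncurry F) := by
    rw [hF]; unfold Function.uncurry; fun_prop
  have hIfun : ∀ z, Ifun lam alp t z = ∫ u, F z u ∂ν := fun z =>
    intervalIntegral.integral_of_le ht.le
  -- pointwise bound for u ∈ Ioc 0 t
  have hbound : ∀ z : ℝ, ∀ u ∈ Set.Ioc (0:ℝ) t, ‖F z u‖ ≤
      lam * Real.exp (lam * t + alp * Real.sqrt t * |z|) := by
    intro z u hu
    rw [hF]
    simp only [Real.norm_eq_abs]
    rw [abs_of_nonneg (by positivity)]
    exact mul_le_mul_of_nonneg_left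
      (Real.exp_le_exp.mpr (exponent_le hlam halp ht (Set.mem_Icc_of_Ioc hu) z)) hlam.le
  have hC : Integrable (fun z => lam * Real.exp (lam * t + alp * Real.sqrt t * |z|) * t)
      (gaussianReal 0 1) := by
    have : (fun z => lam * Real.exp (lam * t + alp * Real.sqrt t * |z|) * t)
        = fun z => (lam * Real.exp (lam * t) * t) * Real.exp (alp * Real.sqrt t * |z|) := by
      funext z; rw [Real.exp_add]; ring
    rw [this]
    exact (integrable_exp_abs_gauss (alp * Real.sqrt t)).const_mul _
  have hνuniv : (ν Set.univ).toReal = t := by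
    rw [hν, Measure.restrict_apply_univ, Real.volume_Ioc, ENNReal.toReal_ofReal (by linarith)]
    ring
  have hint : Integrable (Function.uncurry F) (γ.prod ν) := by
    rw [integrable_prod_iff hFcont.aestronglyMeasurable]
    constructor
    · refine Filter.Eventually.of_forall fun z => ?_
      exact (hFcont.comp (Continuous.prodMk_right z)).integrableOn_Ioc
    · refine hC.mono' ((hFcont.norm.aestronglyMeasurable).integral_prod_right') ?_
      refine Filter.Eventually.of_forall fun z => ?_
      have := norm_integral_le_of_norm_le_const (μ := ν)
        (f := fun u => ‖F z u‖) (C := lam * Real.exp (lam * t + alp * Real.sqrt t * |z|))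
        (((ae_restrict_iff' measurableSet_Ioc).mpr (Filter.Eventually.of_forall fun u hu => by
          rw [norm_norm]; exact hbound z u hu)))
      rw [measureReal_def, hνuniv] at this
      exact this
  have hswap : ∫ z, ∫ u, F z u ∂ν ∂γ = ∫ u, ∫ z, F z u ∂γ ∂ν := integral_integral_swap hint
  have hinner : ∀ u : ℝ, ∫ z, F z u ∂γ = lam * Real.exp (lam * u) := by
    intro u
    have hdecomp : ∀ z : ℝ, F z u =
        (lam * Real.exp (lam * u - alp ^ 2 * u ^ 2 / (2 * t))) *
          Real.exp ((alp * u / Real.sqrt t) * z) := by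
      intro z
      rw [hF]
      dsimp only
      rw [mul_assoc, ← Real.exp_add]
      congr 2
      ring
    simp only [hdecomp]
    rw [integral_const_mul, integral_exp_gauss]
    rw [mul_assoc, ← Real.exp_add]
    congr 2
    have h1 : (alp * u / Real.sqrt t) ^ 2 = alp ^ 2 * u ^ 2 / t := by
      rw [div_pow, Real.sq_sqrt ht.le]
      ring
    rw [h1]
    ring
  calc ∫ z, Ifun lam alp t z ∂γ = ∫ z, ∫ u, F z u ∂ν ∂γ := by simp only [hIfun]
    _ = ∫ u, ∫ z, F z u ∂γ ∂ν := hswap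
    _ = ∫ u, lam * Real.exp (lam * u) ∂ν := by simp only [hinner]
    _ = ∫ u in (0:ℝ)..t, lam * Real.exp (lam * u) := (intervalIntegral.integral_of_le ht.le).symm
    _ = Real.exp (lam * t) - 1 := by
        have hderiv : ∀ u ∈ Set.uIcc (0:ℝ) t,
            HasDerivAt (fun v => Real.exp (lam * v)) (lam * Real.exp (lam * u)) u := by
          intro u _
          have := (Real.hasDerivAt_exp (lam * u)).comp u ((hasDerivAt_id u).const_mul lam)
          simpa [mul_comm, Function.comp_def] using this
        rw [intervalIntegral.integral_eq_sub_of_hasDerivAt hderiv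
          (Continuous.intervalIntegrable (by fun_prop) _ _)]
        simp

section Chain

variable {Ω : Type*}

noncomputable def chainFun (lam alp t φ : ℝ) (z : ℕ → ℝ) : ℕ → ℝ
  | 0 => φ
  | k + 1 => jfun lam alp t (chainFun lam alp t φ z k) (z (k + 1))

lemma jfun_eq (lam alp t φ z : ℝ) :
    jfun lam alp t φ z = Real.exp (alp * z * Real.sqrt t + (lam - alp ^ 2 / 2) * t) * φ
      + Ifun lam alp t z := rfl

lemma continuous_jfun (lam alp t : ℝ) : Continuous (fun p : ℝ × ℝ => jfun lam alp t p.1 p.2) := by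
  simp only [jfun_eq]
  exact (Continuous.mul (by fun_prop) continuous_fst).add
    ((continuous_Ifun lam alp t).comp continuous_snd)

lemma oddsChain_eq_chainFun (lam alp t φ : ℝ) (Z : ℕ → Ω → ℝ) (k : ℕ) (ω : Ω) :
    oddsChain lam alp t φ Z k ω = chainFun lam alp t φ (fun i => Z i ω) k := by
  induction k with
  | zero => rfl
  | succ k ih => simp only [oddsChain, chainFun, ih]

lemma chainFun_congr (lam alp t φ : ℝ) {z z' : ℕ → ℝ} (k : ℕ)
    (h : ∀ i, i ≤ k → z i = z' i) :
    chainFun lam alp t φ z k = chainFun lam alp t φ z' k := by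
  induction k with
  | zero => rfl
  | succ k ih =>
    simp only [chainFun]
    rw [ih (fun i hi => h i (hi.trans (Nat.le_succ k))), h (k+1) le_rfl]

lemma measurable_chainFun (lam alp t φ : ℝ) (k : ℕ) :
    Measurable (fun z : ℕ → ℝ => chainFun lam alp t φ z k) := by
  induction k with
  | zero => exact measurable_const
  | succ k ih =>
    have heq : (fun z : ℕ → ℝ => chainFun lam alp t φ z (k+1))
        = (fun p : ℝ × ℝ => jfun lam alp t p.1 p.2)
          ∘ (fun z : ℕ → ℝ => (chainFun lam alp t φ z k, z (k+1))) := rfl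
    rw [heq]
    exact (continuous_jfun lam alp t).measurable.comp (ih.prodMk (measurable_pi_apply (k+1)))

lemma indep_oddsChain [MeasurableSpace Ω] (μ : MeasureTheory.Measure Ω)
    (lam alp t φ : ℝ) (Z : ℕ → Ω → ℝ) (hZmeas : ∀ k, Measurable (Z k))
    (hZindep : ProbabilityTheory.iIndepFun Z μ) (k : ℕ) :
    ProbabilityTheory.IndepFun (oddsChain lam alp t φ Z k) (Z (k+1)) μ := by
  classical
  have h := hZindep.indepFun_finset (Finset.range (k+1)) {k+1}
    (by simp [Finset.disjoint_left]; omega) hZmeas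
  set G : ({i // i ∈ Finset.range (k+1)} → ℝ) → ℝ := fun v =>
    chainFun lam alp t φ (fun i => if h : i ∈ Finset.range (k+1) then v ⟨i, h⟩ else 0) k with hG
  have hGmeas : Measurable G := by
    apply (measurable_chainFun lam alp t φ k).comp
    apply measurable_pi_lambda
    intro i
    by_cases hi : i ∈ Finset.range (k+1)
    · simp only [dif_pos hi]; exact measurable_pi_apply _
    · simp only [dif_neg hi]; exact measurable_const
  have hE : Measurable (fun v : {i // i ∈ ({k+1} : Finset ℕ)} → ℝ =>
      v ⟨k+1, Finset.mem_singleton_self _⟩) := measurable_pi_apply _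
  have h2 := h.comp hGmeas hE
  have hleft : (G ∘ fun ω (i : {i // i ∈ Finset.range (k+1)}) => Z i ω)
      = oddsChain lam alp t φ Z k := by
    funext ω
    simp only [Function.comp_apply, hG]
    rw [oddsChain_eq_chainFun]
    apply chainFun_congr
    intro i hi
    rw [dif_pos (Finset.mem_range.mpr (Nat.lt_succ_of_le hi))]
  have hright : ((fun v : {i // i ∈ ({k+1} : Finset ℕ)} → ℝ =>
      v ⟨k+1, Finset.mem_singleton_self _⟩) ∘ fun ω (i : {i // i ∈ ({k+1} : Finset ℕ)}) => Z i ω)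
      = Z (k+1) := rfl
  rw [hleft, hright] at h2
  exact h2

end Chain

/-- Mean of the odds chain: `E[Φₖ] = e^{λkt}(φ + 1) − 1` for every `k ≥ 0`. -/
theorem oddsChain_mean (lam alp t : ℝ) (hlam : 0 < lam) (halp : 0 < alp) (ht : 0 < t)
    {Ω : Type*} [MeasurableSpace Ω] (μ : MeasureTheory.Measure Ω) [IsProbabilityMeasure μ]
    (Z : ℕ → Ω → ℝ) (hZmeas : ∀ k, Measurable (Z k))
    (hZdist : ∀ k, 1 ≤ k → μ.map (Z k) = ProbabilityTheory.gaussianReal 0 1)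
    (hZindep : ProbabilityTheory.iIndepFun Z μ)
    (φ : ℝ) (hφ : 0 ≤ φ) :
    ∀ k : ℕ, ∫ ω, oddsChain lam alp t φ Z k ω ∂μ =
      Real.exp (lam * k * t) * (φ + 1) - 1 := by
  set g₁ : ℝ → ℝ := fun z => Real.exp (alp * z * Real.sqrt t + (lam - alp ^ 2 / 2) * t) with hg₁
  have hg₁eq : g₁ = fun z => Real.exp ((lam - alp ^ 2 / 2) * t) * Real.exp ((alp * Real.sqrt t) * z) := by
    funext z; rw [hg₁, ← Real.exp_add]; ring_nf
  have hg₁cont : Continuous g₁ := by rw [hg₁]; fun_prop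
  have hg₁int : Integrable g₁ (gaussianReal 0 1) := by
    rw [hg₁eq]; exact (integrable_exp_gauss (alp * Real.sqrt t)).const_mul _
  have hg₁val : ∫ z, g₁ z ∂(gaussianReal 0 1) = Real.exp (lam * t) := by
    rw [hg₁eq, integral_const_mul, integral_exp_gauss, ← Real.exp_add]
    congr 1
    have : Real.sqrt t ^ 2 = t := Real.sq_sqrt ht.le
    nlinarith [this]
  have key : ∀ k : ℕ, Integrable (oddsChain lam alp t φ Z k) μ ∧
      ∫ ω, oddsChain lam alp t φ Z k ω ∂μ = Real.exp (lam * k * t) * (φ + 1) - 1 := by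
    intro k
    induction k with
    | zero =>
      constructor
      · exact integrable_const φ
      · simp [oddsChain]
    | succ k ih =>
      obtain ⟨hΦint, hΦval⟩ := ih
      set Φ := oddsChain lam alp t φ Z k with hΦ
      have hd := hZdist (k+1) (by omega)
      -- A = g₁ ∘ Z (k+1)
      have hAint : Integrable (fun ω => g₁ (Z (k+1) ω)) μ := by
        have h := integrable_map_measure (μ := μ) (f := Z (k+1)) (g := g₁)
          hg₁cont.aestronglyMeasurable (hZmeas (k+1)).aemeasurable
        rw [hd] at h
        exact h.mp hg₁int
      have hAval : ∫ ω, g₁ (Z (k+1) ω) ∂μ = Real.exp (lam * t) := by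
        rw [← hg₁val, ← hd, integral_map (hZmeas (k+1)).aemeasurable]
        exact hg₁cont.aestronglyMeasurable
      -- B = Ifun ∘ Z (k+1)
      have hBint : Integrable (fun ω => Ifun lam alp t (Z (k+1) ω)) μ := by
        have h := integrable_map_measure (μ := μ) (f := Z (k+1)) (g := Ifun lam alp t)
          (continuous_Ifun lam alp t).aestronglyMeasurable (hZmeas (k+1)).aemeasurable
        rw [hd] at h
        exact h.mp (integrable_Ifun_gauss hlam halp ht)
      have hBval : ∫ ω, Ifun lam alp t (Z (k+1) ω) ∂μ = Real.exp (lam * t) - 1 := by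
        rw [← integral_Ifun_gauss hlam halp ht, ← hd,
          integral_map (hZmeas (k+1)).aemeasurable]
        exact (continuous_Ifun lam alp t).aestronglyMeasurable
      -- independence
      have hindep : ProbabilityTheory.IndepFun (fun ω => g₁ (Z (k+1) ω)) Φ μ := by
        have h := (indep_oddsChain μ lam alp t φ Z hZmeas hZindep k).symm
        exact h.comp hg₁cont.measurable measurable_id
      have hABint : Integrable (fun ω => g₁ (Z (k+1) ω) * Φ ω) μ :=
        hindep.integrable_mul hAint hΦint
      have hABval : ∫ ω, g₁ (Z (k+1) ω) * Φ ω ∂μ =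
          (∫ ω, g₁ (Z (k+1) ω) ∂μ) * ∫ ω, Φ ω ∂μ :=
        hindep.integral_fun_mul_eq_mul_integral hAint.aestronglyMeasurable hΦint.aestronglyMeasurable
      have hsucc : oddsChain lam alp t φ Z (k+1)
          = fun ω => g₁ (Z (k+1) ω) * Φ ω + Ifun lam alp t (Z (k+1) ω) := rfl
      constructor
      · rw [hsucc]; exact hABint.add hBint
      · rw [hsucc]
        rw [integral_add hABint hBint, hABval, hAval, hΦval, hBval]
        have hmul : Real.exp (lam * t) * Real.exp (lam * (k : ℝ) * t)
            = Real.exp (lam * ((k : ℕ) + 1 : ℝ) * t) := by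
          rw [← Real.exp_add]; ring_nf
        push_cast
        nlinarith [hmul]
  exact fun k => (key k).2
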